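/- Let L > 0 and let D be a linear differentiator, i.e., D(α₁u₁ + α₂u₂) = α₁·Du₁ + α₂·Du₂ for all admissible inputs u₁, u₂ and reals α₁, α₂. Then D cannot be both exact in finite time over F_L and robust in finite time over F_L. That is, it is impossible that simultaneously: (exactness) for every R ≥ 0 there exists t_R such that [D f](t) = ḟ(t) for all f ∈ F_L^R and all t ≥ t_R; and (robustness) for every R ≥ 0 there exists t'_R such that for every δ > 0 there exists N₀ > 0 with |[D f](t) − [D(f + η)](t)| ≤ δ for all N ∈ (0, N₀], f ∈ F_L^R, η ∈ E_N, and t ≥ t'_R. -/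

import Mathlib

open Set Filter Topology

/-- `f ∈ F_L`: `f : [0,∞) → ℝ` is differentiable with derivative `f'`
that is Lipschitz continuous with constant `L` on `[0,∞)`. -/
def IsFL (L : ℝ) (f f' : ℝ → ℝ) : Prop :=
  (∀ t ∈ Set.Ici (0:ℝ), HasDerivWithinAt f (f' t) (Set.Ici 0) t) ∧
  ∀ s ∈ Set.Ici (0:ℝ), ∀ t ∈ Set.Ici (0:ℝ), |f' s - f' t| ≤ L * |s - t|

/-- `η ∈ E_N`: measurable noise bounded by `N` on `[0,∞)`. -/
def IsEN (N : ℝ) (η : ℝ → ℝ) : Prop :=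
  Measurable η ∧ ∀ t ∈ Set.Ici (0:ℝ), |η t| ≤ N

/-- `f ∈ F_L^R`: member of `F_L` with `|f(0)| ≤ R` and `|ḟ(0)| ≤ R`. -/
def IsFLR (L R : ℝ) (f f' : ℝ → ℝ) : Prop :=
  IsFL L f f' ∧ |f 0| ≤ R ∧ |f' 0| ≤ R

/-- A differentiator is causal if its output at time `T` depends only on the
input on `[0, T]`. -/
def Causal (D : (ℝ → ℝ) → ℝ → ℝ) : Prop :=
  ∀ u₁ u₂ T, (∀ t ∈ Set.Icc (0:ℝ) T, u₁ t = u₂ t) → D u₁ T = D u₂ T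

/-- The class `𝒰` of admissible inputs: sums `f + η` with `f ∈ F_L`, `η ∈ E_N`
for some `L, N ≥ 0`. -/
def InU (u : ℝ → ℝ) : Prop :=
  ∃ (L N : ℝ) (f f' η : ℝ → ℝ), 0 ≤ L ∧ 0 ≤ N ∧ IsFL L f f' ∧ IsEN N η ∧ u = f + η

theorem stmt6 (L : ℝ) (hL : 0 < L) (D : (ℝ → ℝ) → ℝ → ℝ)
    (hlin : ∀ u₁ u₂ : ℝ → ℝ, InU u₁ → InU u₂ → ∀ α₁ α₂ : ℝ,
      D (fun t => α₁ * u₁ t + α₂ * u₂ t) = fun t => α₁ * D u₁ t + α₂ * D u₂ t) :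
    ¬ ((∀ R : ℝ, 0 ≤ R → ∃ tR : ℝ, ∀ f f' : ℝ → ℝ, IsFLR L R f f' →
          ∀ t, tR ≤ t → D f t = f' t) ∧
       (∀ R : ℝ, 0 ≤ R → ∃ tR' : ℝ, ∀ δ : ℝ, 0 < δ → ∃ N₀ : ℝ, 0 < N₀ ∧
          ∀ N : ℝ, 0 < N → N ≤ N₀ → ∀ f f' η : ℝ → ℝ, IsFLR L R f f' → IsEN N η →
            ∀ t, tR' ≤ t → |D f t - D (f + η) t| ≤ δ)) := by
  rintro ⟨hex, hrob⟩
  obtain ⟨t₀, ht₀⟩ := hex 0 le_rfl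
  obtain ⟨t₁, ht₁⟩ := hrob 0 le_rfl
  obtain ⟨N₀, hN₀, hrb⟩ := ht₁ 1 one_pos
  set ω : ℝ := 4 / N₀ with hωdef
  have hω : 0 < ω := by positivity
  set A : ℝ := L / ω^2 with hAdef
  have hA : 0 < A := by positivity
  set ε : ℝ := N₀ / (2*A) with hεdef
  have hε : 0 < ε := by positivity
  have hAω2 : A * ω^2 = L := by
    rw [hAdef]; field_simp
  have hεA : ε * A = N₀ / 2 := by
    rw [hεdef]; field_simp
  set g : ℝ → ℝ := fun t => A * (1 - Real.cos (ω*t)) with hg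
  set g' : ℝ → ℝ := fun t => A * ω * Real.sin (ω*t) with hg'
  have hd : ∀ t : ℝ, HasDerivAt g (g' t) t := by
    intro t
    have h2 : HasDerivAt (fun x : ℝ => ω * x) (ω * 1) t := (hasDerivAt_id t).const_mul ω
    have h1 : HasDerivAt (fun x : ℝ => Real.cos (ω*x)) (-Real.sin (ω*t) * (ω*1)) t :=
      (Real.hasDerivAt_cos (ω*t)).comp t h2
    have h3 := ((hasDerivAt_const t (1:ℝ)).sub h1).const_mul A
    refine h3.congr_deriv ?_
    simp only [hg']; ring
  have hFL : IsFL L g g' := by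
    constructor
    · intro t _; exact (hd t).hasDerivWithinAt
    · intro s _ t _
      have hsinlip : LipschitzWith 1 Real.sin := by
        apply lipschitzWith_of_nnnorm_deriv_le Real.differentiable_sin
        intro x
        rw [Real.deriv_sin]
        simp [← NNReal.coe_le_coe, Real.abs_cos_le_one x]
      have hlip := hsinlip.dist_le_mul (ω*s) (ω*t)
      rw [Real.dist_eq, Real.dist_eq, NNReal.coe_one] at hlip
      have key : |g' s - g' t| = A * ω * |Real.sin (ω*s) - Real.sin (ω*t)| := by
        simp only [hg']
        rw [show A*ω*Real.sin (ω*s) - A*ω*Real.sin (ω*t)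
              = (A*ω)*(Real.sin (ω*s) - Real.sin (ω*t)) by ring,
          abs_mul, abs_of_pos (mul_pos hA hω)]
      rw [key]
      calc A * ω * |Real.sin (ω*s) - Real.sin (ω*t)| ≤ A * ω * (1 * |ω*s - ω*t|) := by
            gcongr
        _ = L * |s - t| := by
            rw [one_mul, ← mul_sub, abs_mul, abs_of_pos hω, ← hAω2]; ring
  have hFLR : IsFLR L 0 g g' := by
    refine ⟨hFL, ?_, ?_⟩ <;> simp [hg, hg']
  have hFLR0 : IsFLR L 0 (0 : ℝ → ℝ) (fun _ => (0:ℝ)) := by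
    refine ⟨⟨fun t _ => ?_, fun s _ t _ => by simpa using mul_nonneg hL.le (abs_nonneg (s - t))⟩, by simp, by simp⟩
    exact (hasDerivWithinAt_const t (Set.Ici (0:ℝ)) (0:ℝ))
  set η : ℝ → ℝ := fun t => ε * g t with hηdef
  have hEN : IsEN N₀ η := by
    constructor
    · exact (continuous_const.mul ((continuous_const.mul
        ((continuous_const.sub (Real.continuous_cos.comp (continuous_const.mul continuous_id))))))).measurable
    · intro t _
      have h1 : -1 ≤ Real.cos (ω*t) := Real.neg_one_le_cos _
      have h2 : Real.cos (ω*t) ≤ 1 := Real.cos_le_one _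
      have : |η t| ≤ ε * A * 2 := by
        rw [hηdef]
        simp only [hg]
        rw [abs_mul, abs_of_pos hε, abs_mul, abs_of_pos hA, mul_assoc]
        gcongr
        rw [abs_le]; constructor <;> linarith
      linarith [this, hεA.symm ▸ (by linarith : ε * A * 2 = ε * A * 2)]
  -- note ε*A*2 = N₀
  have hbound : ε * A * 2 = N₀ := by rw [hεA]; ring
  have hInUg : InU g := ⟨L, 0, g, g', 0, hL.le, le_rfl, hFL, ⟨measurable_zero, by simp⟩, by simp⟩
  have hInU0 : InU 0 := ⟨0, 0, 0, 0, 0, le_rfl, le_rfl, ⟨fun t _ => by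
      exact (hasDerivWithinAt_const t (Set.Ici (0:ℝ)) (0:ℝ)), fun s _ t _ => by simp [abs_nonneg]⟩,
    ⟨measurable_zero, by simp⟩, by simp⟩
  have hlin1 := hlin g 0 hInUg hInU0 ε 0
  have hηeq : η = fun t => ε * g t + 0 * (0:ℝ→ℝ) t := by funext t; simp [hηdef]
  -- choose time
  set T : ℝ := max t₀ t₁ with hT
  obtain ⟨k, hk⟩ := exists_nat_ge (ω * T / (2 * Real.pi))
  set tt : ℝ := (Real.pi/2 + 2*Real.pi*k) / ω with htt
  have hpi := Real.pi_pos
  have hωtt : ω * tt = Real.pi/2 + 2*Real.pi*k := by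
    rw [htt, mul_div_cancel₀ _ (ne_of_gt hω)]
  have hsin : Real.sin (ω * tt) = 1 := by
    rw [hωtt]
    have : Real.pi/2 + 2*Real.pi*k = Real.pi/2 + k * (2*Real.pi) := by ring
    rw [this, Real.sin_add_nat_mul_two_pi, Real.sin_pi_div_two]
  have httT : T ≤ tt := by
    have h1 : ω * T ≤ 2 * Real.pi * k := by
      have := (div_le_iff₀ (by positivity : (0:ℝ) < 2 * Real.pi)).mp hk
      linarith
    have h2 : ω * T ≤ ω * tt := by rw [hωtt]; linarith
    exact le_of_mul_le_mul_left h2 hω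
  have htt0 : t₀ ≤ tt := le_trans (le_max_left _ _) httT
  have htt1 : t₁ ≤ tt := le_trans (le_max_right _ _) httT
  -- exactness applications
  have hD0 : D 0 tt = 0 := ht₀ 0 (fun _ => 0) hFLR0 tt htt0
  have hDg : D g tt = g' tt := ht₀ g g' hFLR tt htt0
  have hDη : D η tt = ε * g' tt := by
    rw [hηeq]
    have := congrFun hlin1 tt
    rw [this, hDg]
    simp
  -- robustness application
  have hrob1 := hrb N₀ hN₀ le_rfl 0 (fun _ => 0) η hFLR0 hEN tt htt1
  rw [zero_add, hD0, hDη] at hrob1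
  have hval : ε * g' tt = 2 := by
    rw [hg']
    simp only []
    rw [hsin, mul_one]
    have : ε * (A * ω) = ε * A * ω := by ring
    rw [this, hεA, hωdef]
    field_simp
    ring
  rw [hval] at hrob1
  norm_num at hrob1
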